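/- arXiv:2405.14901 — 4 statements merged into one kernel-verified Lean document; each statement's English description precedes it below -/
import Mathlib

section
/- Let b ≥ 1, c ≥ b+1 and z ∈ ℝ, z ≠ 0. Then ₁F₁(b;c;z) ≤ (λ_{b−1,c−b−1}/B(b,c−b)) · (e^z − 1)/z. -/
open Real MeasureTheory

/-- Classical Euler beta function `B(x,y) = ∫₀¹ t^(x-1) (1-t)^(y-1) dt`. -/
noncomputable def eulerBeta (x y : ℝ) : ℝ :=
  ∫ t in (0:ℝ)..1, t ^ (x - 1) * (1 - t) ^ (y - 1)

/-- `λ_{x,y} = x^x y^y / (x+y)^(x+y)`; the convention `0^0 = 1` is automatic for `rpow`. -/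
noncomputable def lam (x y : ℝ) : ℝ := x ^ x * y ^ y / (x + y) ^ (x + y)

/-- Pochhammer symbol `(x)_n = x (x+1) ⋯ (x+n-1)`. -/
noncomputable def poch (x : ℝ) (n : ℕ) : ℝ := ∏ k ∈ Finset.range n, (x + k)

/-- Confluent hypergeometric (Kummer) function `₁F₁(b;c;z)`. -/
noncomputable def oneF1 (b c z : ℝ) : ℝ :=
  ∑' n : ℕ, poch b n / poch c n * z ^ n / (Nat.factorial n : ℝ)

lemma lam_bound {x y t : ℝ} (hx : 0 ≤ x) (hy : 0 ≤ y) (ht0 : 0 ≤ t) (ht1 : t ≤ 1) :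
    t ^ x * (1 - t) ^ y ≤ lam x y := by
  have h1t : 0 ≤ 1 - t := by linarith
  rcases hx.eq_or_lt with hx0 | hx
  · rcases hy.eq_or_lt with hy0 | hy
    · simp [lam, ← hx0, ← hy0]
    · simp only [lam, ← hx0, rpow_zero, one_mul, zero_add]
      rw [div_self (by positivity)]
      exact rpow_le_one h1t (by linarith) hy.le
  · rcases hy.eq_or_lt with hy0 | hy
    · simp only [lam, ← hy0, rpow_zero, mul_one, add_zero]
      rw [div_self (by positivity)]
      exact rpow_le_one ht0 ht1 hx.le
    · set s := x + y with hs
      have hspos : 0 < s := by positivity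
      have key : (t * s / x) ^ (x / s) * ((1 - t) * s / y) ^ (y / s) ≤ 1 := by
        have := Real.geom_mean_le_arith_mean2_weighted
          (w₁ := x / s) (w₂ := y / s) (p₁ := t * s / x) (p₂ := (1 - t) * s / y)
          (by positivity) (by positivity) (by positivity) (by positivity)
          (by field_simp; linarith)
        calc (t * s / x) ^ (x / s) * ((1 - t) * s / y) ^ (y / s)
            ≤ x / s * (t * s / x) + y / s * ((1 - t) * s / y) := this
          _ = 1 := by field_simp; ring
      have key2 : (t * s / x) ^ x * ((1 - t) * s / y) ^ y ≤ 1 := by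
        have := rpow_le_one (z := s) (by positivity) key hspos.le
        rwa [mul_rpow (by positivity) (by positivity), ← rpow_mul (by positivity),
          ← rpow_mul (by positivity), div_mul_cancel₀ _ hspos.ne',
          div_mul_cancel₀ _ hspos.ne'] at this
      have e1 : t ^ x = (t * s / x) ^ x * (x / s) ^ x := by
        rw [← mul_rpow (by positivity) (by positivity)]
        congr 1
        field_simp
      have e2 : (1 - t) ^ y = ((1 - t) * s / y) ^ y * (y / s) ^ y := by
        rw [← mul_rpow (by positivity) (by positivity)]
        congr 1
        field_simp
      have e3 : lam x y = (x / s) ^ x * (y / s) ^ y := by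
        rw [lam, div_rpow hx.le hspos.le, div_rpow hy.le hspos.le, ← hs,
          div_mul_div_comm, ← rpow_add hspos]
      rw [e1, e2, e3]
      calc (t * s / x) ^ x * (x / s) ^ x * (((1 - t) * s / y) ^ y * (y / s) ^ y)
          = ((t * s / x) ^ x * ((1 - t) * s / y) ^ y) * ((x / s) ^ x * (y / s) ^ y) := by ring
        _ ≤ 1 * ((x / s) ^ x * (y / s) ^ y) := by
            apply mul_le_mul_of_nonneg_right key2 (by positivity)
        _ = (x / s) ^ x * (y / s) ^ y := one_mul _

lemma eulerBeta_eq_gamma {p q : ℝ} (hp : 0 < p) (hq : 0 < q) :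
    eulerBeta p q = Real.Gamma p * Real.Gamma q / Real.Gamma (p + q) := by
  have h1 : ((eulerBeta p q : ℝ) : ℂ) = Complex.betaIntegral p q := by
    rw [eulerBeta, Complex.betaIntegral, ← intervalIntegral.integral_ofReal]
    refine intervalIntegral.integral_congr fun x hx => ?_
    rw [Set.uIcc_of_le (by norm_num : (0:ℝ) ≤ 1)] at hx
    push_cast
    rw [Complex.ofReal_cpow hx.1 (p - 1), Complex.ofReal_cpow (by linarith [hx.2]) (q - 1)]
    push_cast
    ring
  have h2 : Complex.Gamma (p + q : ℝ) ≠ 0 := by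
    rw [Complex.Gamma_ofReal]
    exact_mod_cast (Real.Gamma_pos_of_pos (by linarith)).ne'
  have h3 := Complex.Gamma_mul_Gamma_eq_betaIntegral
    (s := (p : ℂ)) (t := (q : ℂ)) (by simpa using hp) (by simpa using hq)
  have h4 : Complex.betaIntegral p q =
      Complex.Gamma p * Complex.Gamma q / Complex.Gamma (p + q : ℝ) := by
    rw [eq_div_iff h2, mul_comm, h3]
    norm_cast
  apply Complex.ofReal_injective
  rw [h1, h4, Complex.Gamma_ofReal, Complex.Gamma_ofReal, Complex.Gamma_ofReal]
  push_cast
  ring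

lemma gamma_add_nat {p : ℝ} (hp : 0 < p) (n : ℕ) :
    Real.Gamma (p + n) = poch p n * Real.Gamma p := by
  induction n with
  | zero => simp [poch]
  | succ n ih =>
    have : p + (n + 1 : ℕ) = (p + n) + 1 := by push_cast; ring
    rw [this, Real.Gamma_add_one (by positivity), ih, poch, poch,
      Finset.prod_range_succ]
    ring

lemma poch_pos {p : ℝ} (hp : 0 < p) (n : ℕ) : 0 < poch p n :=
  Finset.prod_pos fun k _ => by positivity

lemma eulerBeta_shift {b d : ℝ} (hb : 0 < b) (hd : 0 < d) (n : ℕ) :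
    eulerBeta (b + n) d = poch b n / poch (b + d) n * eulerBeta b d := by
  rw [eulerBeta_eq_gamma (by positivity) hd, eulerBeta_eq_gamma hb hd,
    gamma_add_nat hb n]
  have : b + n + d = (b + d) + n := by ring
  rw [this, gamma_add_nat (by positivity) n]
  have g1 := Real.Gamma_pos_of_pos hb
  have g2 := Real.Gamma_pos_of_pos (show (0:ℝ) < b + d by positivity)
  have p1 := poch_pos (show (0:ℝ) < b + d by positivity) n
  field_simp

lemma key_repr {b d z : ℝ} (hb : 1 ≤ b) (hd : 1 ≤ d) :
    eulerBeta b d * oneF1 b (b + d) z =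
      ∫ t in Set.Ioc (0:ℝ) 1, t ^ (b - 1) * (1 - t) ^ (d - 1) * Real.exp (z * t) := by
  have hb1 : (0:ℝ) ≤ b - 1 := by linarith
  have hd1 : (0:ℝ) ≤ d - 1 := by linarith
  set F : ℕ → ℝ → ℝ :=
    fun n t => t ^ (b - 1) * (1 - t) ^ (d - 1) * ((z * t) ^ n / (Nat.factorial n : ℝ)) with hF
  have cont1 : Continuous fun t : ℝ => t ^ (b - 1) := Real.continuous_rpow_const hb1
  have cont2 : Continuous fun t : ℝ => (1 - t) ^ (d - 1) :=
    (Real.continuous_rpow_const hd1).comp (continuous_const.sub continuous_id)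
  have hFcont : ∀ n, Continuous (F n) := fun n => by
    apply ((cont1.mul cont2).mul (Continuous.div_const (by fun_prop) _))
  have hFint : ∀ n : ℕ, IntegrableOn (F n) (Set.Ioc (0:ℝ) 1) :=
    fun n => (hFcont n).integrableOn_Ioc
  have hbound : ∀ n : ℕ, ∀ t ∈ Set.Ioc (0:ℝ) 1, ‖F n t‖ ≤ |z| ^ n / (Nat.factorial n : ℝ) := by
    intro n t ht
    have ht0 : 0 ≤ t := ht.1.le
    have ht1 : t ≤ 1 := ht.2
    have h1 : |t ^ (b - 1)| ≤ 1 := by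
      rw [abs_of_nonneg (rpow_nonneg ht0 _)]
      exact rpow_le_one ht0 ht1 hb1
    have h2 : |(1 - t) ^ (d - 1)| ≤ 1 := by
      rw [abs_of_nonneg (rpow_nonneg (by linarith) _)]
      exact rpow_le_one (by linarith) (by linarith) hd1
    have h3 : |(z * t) ^ n / (Nat.factorial n : ℝ)| ≤ |z| ^ n / (Nat.factorial n : ℝ) := by
      rw [abs_div, abs_pow, abs_mul, Nat.abs_cast]
      gcongr
      calc |z| * |t| ≤ |z| * 1 := by gcongr; rw [abs_of_nonneg ht0]; exact ht1
        _ = |z| := mul_one _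
    calc ‖F n t‖ = |t ^ (b - 1)| * |(1 - t) ^ (d - 1)| * |(z * t) ^ n / (Nat.factorial n : ℝ)| := by
          simp only [hF, Real.norm_eq_abs, abs_mul]
      _ ≤ 1 * 1 * (|z| ^ n / (Nat.factorial n : ℝ)) :=
          mul_le_mul (mul_le_mul h1 h2 (abs_nonneg _) zero_le_one) h3 (abs_nonneg _) (by norm_num)
      _ = |z| ^ n / (Nat.factorial n : ℝ) := by ring
  have hnorm_le : ∀ n : ℕ, (∫ t in Set.Ioc (0:ℝ) 1, ‖F n t‖) ≤ |z| ^ n / (Nat.factorial n : ℝ) := by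
    intro n
    calc (∫ t in Set.Ioc (0:ℝ) 1, ‖F n t‖)
        ≤ ∫ _ in Set.Ioc (0:ℝ) 1, |z| ^ n / (Nat.factorial n : ℝ) := by
          apply setIntegral_mono_on (hFint n).norm ((integrableOn_const_iff enorm_ne_top).mpr (by right; simp))
            measurableSet_Ioc (hbound n)
      _ = |z| ^ n / (Nat.factorial n : ℝ) := by simp
  have hsum : Summable fun n : ℕ => ∫ t in Set.Ioc (0:ℝ) 1, ‖F n t‖ := by
    refine Summable.of_nonneg_of_le (fun n => ?_) hnorm_le (Real.summable_pow_div_factorial _)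
    exact integral_nonneg fun t => norm_nonneg _
  have interchange := MeasureTheory.integral_tsum_of_summable_integral_norm hFint hsum
  have htsum : ∀ t : ℝ, ∑' n, F n t = t ^ (b - 1) * (1 - t) ^ (d - 1) * Real.exp (z * t) := by
    intro t
    rw [hF]
    simp only
    rw [tsum_mul_left, Real.exp_eq_exp_ℝ, NormedSpace.exp_eq_tsum_div]
  have hper : ∀ n : ℕ, (∫ t in Set.Ioc (0:ℝ) 1, F n t)
      = z ^ n / (Nat.factorial n : ℝ) * eulerBeta (b + n) d := by
    intro n
    have hcong : ∀ t ∈ Set.Ioc (0:ℝ) 1,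
        F n t = z ^ n / (Nat.factorial n : ℝ) * (t ^ (b + n - 1) * (1 - t) ^ (d - 1)) := by
      intro t ht
      rw [hF]
      simp only
      rw [mul_pow, show b + n - 1 = (b - 1) + (n : ℝ) by ring, rpow_add ht.1,
        rpow_natCast]
      ring
    rw [setIntegral_congr_fun measurableSet_Ioc hcong, integral_const_mul, eulerBeta,
      intervalIntegral.integral_of_le zero_le_one]
  rw [oneF1, ← tsum_mul_left]
  rw [show (∫ t in Set.Ioc (0:ℝ) 1, t ^ (b - 1) * (1 - t) ^ (d - 1) * Real.exp (z * t))
      = ∑' n, ∫ t in Set.Ioc (0:ℝ) 1, F n t from by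
    rw [interchange]
    exact setIntegral_congr_fun measurableSet_Ioc fun t _ => (htsum t).symm]
  apply tsum_congr
  intro n
  rw [hper n, eulerBeta_shift (by linarith) (by linarith) n]
  ring

theorem stmt1 (b c z : ℝ) (hb : 1 ≤ b) (hc : b + 1 ≤ c) (hz : z ≠ 0) :
    oneF1 b c z ≤ lam (b - 1) (c - b - 1) / eulerBeta b (c - b) * ((Real.exp z - 1) / z) := by
  set d := c - b with hd
  have hd1 : 1 ≤ d := by simp only [hd]; linarith
  have hb1 : (0:ℝ) ≤ b - 1 := by linarith
  have hdd1 : (0:ℝ) ≤ d - 1 := by linarith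
  have hB : 0 < eulerBeta b d := by
    rw [eulerBeta_eq_gamma (by linarith) (by linarith)]
    have := Real.Gamma_pos_of_pos (show (0:ℝ) < b by linarith)
    have := Real.Gamma_pos_of_pos (show (0:ℝ) < d by linarith)
    have := Real.Gamma_pos_of_pos (show (0:ℝ) < b + d by linarith)
    positivity
  have hbd : b + d = c := by simp [hd]
  have key := key_repr (b := b) (d := d) (z := z) hb hd1
  rw [hbd] at key
  -- integral of exp
  have hJ : (∫ t in Set.Ioc (0:ℝ) 1, Real.exp (z * t)) = (Real.exp z - 1) / z := by
    rw [← intervalIntegral.integral_of_le zero_le_one,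
      intervalIntegral.integral_comp_mul_left (fun x => Real.exp x) hz]
    simp [integral_exp, smul_eq_mul]
    ring
  -- comparison
  have hint1 : IntegrableOn (fun t : ℝ => t ^ (b - 1) * (1 - t) ^ (d - 1) * Real.exp (z * t))
      (Set.Ioc (0:ℝ) 1) := by
    apply Continuous.integrableOn_Ioc
    exact ((Real.continuous_rpow_const hb1).mul
      ((Real.continuous_rpow_const hdd1).comp (continuous_const.sub continuous_id))).mul
      (Real.continuous_exp.comp (continuous_const.mul continuous_id))
  have hint2 : IntegrableOn (fun t : ℝ => lam (b - 1) (d - 1) * Real.exp (z * t))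
      (Set.Ioc (0:ℝ) 1) := by
    apply Continuous.integrableOn_Ioc
    exact continuous_const.mul (Real.continuous_exp.comp (continuous_const.mul continuous_id))
  have hmono : (∫ t in Set.Ioc (0:ℝ) 1, t ^ (b - 1) * (1 - t) ^ (d - 1) * Real.exp (z * t))
      ≤ ∫ t in Set.Ioc (0:ℝ) 1, lam (b - 1) (d - 1) * Real.exp (z * t) := by
    apply setIntegral_mono_on hint1 hint2 measurableSet_Ioc
    intro t ht
    exact mul_le_mul_of_nonneg_right (lam_bound hb1 hdd1 ht.1.le ht.2) (Real.exp_nonneg _)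
  rw [div_mul_eq_mul_div, le_div_iff₀ hB, mul_comm (oneF1 b c z)]
  calc eulerBeta b d * oneF1 b c z
      ≤ ∫ t in Set.Ioc (0:ℝ) 1, lam (b - 1) (d - 1) * Real.exp (z * t) := key ▸ hmono
    _ = lam (b - 1) (d - 1) * ((Real.exp z - 1) / z) := by rw [integral_const_mul, hJ]
end

section
/- Let a > 0 with a ≠ 1, b ≥ 1, c ≥ b+1 and z ∈ ℝ with 0 < |z| < 1. Then ₂F₁(a,b;c;z) ≤ (λ_{b−1,c−b−1}/B(b,c−b)) · (1 − (1−z)^{1−a})/((1−a) z). -/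
open Real MeasureTheory

/-- Gauss hypergeometric function `₂F₁(a,b;c;z)`. -/
noncomputable def twoF1 (a b c z : ℝ) : ℝ :=
  ∑' n : ℕ, poch a n * poch b n / poch c n * z ^ n / (Nat.factorial n : ℝ)

lemma poch_succ (x : ℝ) (n : ℕ) : poch x (n + 1) = poch x n * (x + n) := by
  simp [poch, Finset.prod_range_succ]

lemma poch_pos_s4 {x : ℝ} (hx : 0 < x) (n : ℕ) : 0 < poch x n := by
  apply Finset.prod_pos
  intro k _
  positivity

lemma Gamma_add_nat {x : ℝ} (hx : 0 < x) (n : ℕ) :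
    Real.Gamma (x + n) = poch x n * Real.Gamma x := by
  induction n with
  | zero => simp [poch]
  | succ n ih =>
    have hxn : (0:ℝ) < x + n := by positivity
    have : x + (n + 1 : ℕ) = (x + n) + 1 := by push_cast; ring
    rw [this, Real.Gamma_add_one (ne_of_gt hxn), ih, poch_succ]
    ring

lemma eulerBeta_eq {x y : ℝ} (hx : 0 < x) (hy : 0 < y) :
    eulerBeta x y = Real.Gamma x * Real.Gamma y / Real.Gamma (x + y) := by
  have h1 : ((eulerBeta x y : ℝ) : ℂ) = Complex.betaIntegral x y := by
    rw [eulerBeta, Complex.betaIntegral, ← intervalIntegral.integral_ofReal]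
    apply intervalIntegral.integral_congr
    intro t ht
    rw [Set.uIcc_of_le (by norm_num : (0:ℝ) ≤ 1)] at ht
    push_cast
    rw [Complex.ofReal_cpow ht.1, Complex.ofReal_cpow (by linarith [ht.2] : (0:ℝ) ≤ 1 - t)]
    push_cast
    ring_nf
  have h2 : Complex.Gamma x * Complex.Gamma y
      = Complex.Gamma (x + y) * Complex.betaIntegral x y :=
    Complex.Gamma_mul_Gamma_eq_betaIntegral (by simpa using hx) (by simpa using hy)
  have h3 : Complex.Gamma ((x:ℂ) + y) = ((Real.Gamma (x + y) : ℝ) : ℂ) := by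
    rw [← Complex.ofReal_add, Complex.Gamma_ofReal]
  have hne : Real.Gamma (x + y) ≠ 0 := (Real.Gamma_pos_of_pos (add_pos hx hy)).ne'
  rw [Complex.Gamma_ofReal, Complex.Gamma_ofReal, h3, ← h1] at h2
  have := h2
  rw [eq_div_iff hne]
  have h4 : ((Real.Gamma x * Real.Gamma y : ℝ) : ℂ) = ((eulerBeta x y * Real.Gamma (x+y) : ℝ) : ℂ) := by
    push_cast
    rw [h2]; ring
  exact (by exact_mod_cast h4 : Real.Gamma x * Real.Gamma y = eulerBeta x y * Real.Gamma (x+y)).symm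

lemma poch_ratio {b c : ℝ} (hb : 0 < b) (hcb : 0 < c - b) (n : ℕ) :
    poch b n / poch c n * eulerBeta b (c - b) = eulerBeta (b + n) (c - b) := by
  have hc : 0 < c := by linarith
  have hbn : 0 < b + (n:ℝ) := by positivity
  have e1 := eulerBeta_eq hb hcb
  have e2 := eulerBeta_eq hbn hcb
  have h1 : b + (c - b) = c := by ring
  have h2 : b + (n:ℝ) + (c - b) = c + n := by ring
  rw [h1] at e1
  rw [h2] at e2
  rw [e1, e2, Gamma_add_nat hb, Gamma_add_nat hc]
  have g1 := (Real.Gamma_pos_of_pos hb).ne'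
  have g2 := (Real.Gamma_pos_of_pos hc).ne'
  have g3 := (Real.Gamma_pos_of_pos hcb).ne'
  have p1 := (poch_pos_s4 hc n).ne'
  field_simp

lemma summable_main {a r : ℝ} (ha : 0 < a) (hr0 : 0 < r) (hr1 : r < 1) :
    Summable (fun n : ℕ => poch a n / (Nat.factorial n : ℝ) * (n + 1) * r ^ n) := by
  set f : ℕ → ℝ := fun n => poch a n / (Nat.factorial n : ℝ) * (n + 1) * r ^ n with hf
  have hfpos : ∀ n, 0 < f n := by
    intro n
    have := poch_pos_s4 ha n
    have : (0:ℝ) < (Nat.factorial n : ℝ) := by positivity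
    positivity
  apply summable_of_ratio_test_tendsto_lt_one hr1
    (Filter.Eventually.of_forall fun n => (hfpos n).ne')
  have key : ∀ n : ℕ, ‖f (n+1)‖ / ‖f n‖
      = (1 + (a - 1)/(n + 1)) * (1 + 1/(n + 1)) * r := by
    intro n
    rw [Real.norm_of_nonneg (hfpos (n+1)).le, Real.norm_of_nonneg (hfpos n).le, hf]
    simp only
    rw [poch_succ, Nat.factorial_succ]
    have h1 : ((n:ℝ) + 1) ≠ 0 := by positivity
    have h2 : ((n:ℝ) + 2) ≠ 0 := by positivity
    have h3 : (Nat.factorial n : ℝ) ≠ 0 := by positivity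
    have h4 : poch a n ≠ 0 := (poch_pos_s4 ha n).ne'
    have h5 : r ^ n ≠ 0 := by positivity
    have e1 : (1 + (a - 1)/(n + 1)) = (a + n)/(n+1) := by field_simp; ring
    have e2 : (1 + 1/((n:ℝ) + 1)) = (n+2)/(n+1) := by field_simp; ring
    push_cast
    rw [e1, e2, pow_succ]
    field_simp
    ring
  rw [funext key]
  have t1 : Filter.Tendsto (fun n : ℕ => 1 + (a - 1)/(n + 1)) Filter.atTop (nhds 1) := by
    have t0 := Filter.Tendsto.const_mul (a - 1) (tendsto_one_div_add_atTop_nhds_zero_nat)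
    simpa [mul_one_div, div_eq_mul_inv] using Filter.Tendsto.const_add 1 t0
  have t2 : Filter.Tendsto (fun n : ℕ => 1 + 1/((n:ℝ) + 1)) Filter.atTop (nhds 1) := by
    simpa using Filter.Tendsto.const_add 1 (tendsto_one_div_add_atTop_nhds_zero_nat (𝕜 := ℝ))
  have := (t1.mul t2).mul_const r
  simpa using this

lemma cn_pos {a : ℝ} (ha : 0 < a) (n : ℕ) : 0 < poch a n / (Nat.factorial n : ℝ) := by
  have := poch_pos_s4 ha n
  have : (0:ℝ) < (Nat.factorial n : ℝ) := by positivity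
  have := poch_pos_s4 ha n
  positivity

lemma deriv_bound {a : ℝ} (ha : 0 < a) (n : ℕ) {y r : ℝ} (hy : |y| ≤ r) (hr0 : 0 < r) :
    |poch a n / (Nat.factorial n : ℝ) * ((n : ℝ) * y ^ (n - 1))|
      ≤ poch a n / (Nat.factorial n : ℝ) * (n + 1) * r ^ n / r := by
  have hc := (cn_pos ha n).le
  rw [abs_mul, abs_mul, abs_of_nonneg hc, abs_pow]
  rcases n with _ | m
  · have hp := poch_pos_s4 ha 0
    simp only [Nat.cast_zero, zero_mul, mul_zero, abs_zero]
    positivity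
  · have h1 : |y| ^ (m + 1 - 1) ≤ r ^ m := by
      simpa using pow_le_pow_left₀ (abs_nonneg y) hy m
    have h2 : |((m + 1 : ℕ) : ℝ)| = (m : ℝ) + 1 := by
      rw [abs_of_nonneg] <;> push_cast <;> [skip; positivity]
      rfl
    rw [h2]
    have step1 : poch a (m+1) / (Nat.factorial (m+1) : ℝ) * (((m:ℝ) + 1) * |y| ^ (m + 1 - 1))
        ≤ poch a (m+1) / (Nat.factorial (m+1) : ℝ) * (((m:ℝ) + 1 + 1) * r ^ m) := by
      apply mul_le_mul_of_nonneg_left _ (cn_pos ha (m+1)).le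
      have : ((m:ℝ) + 1) * |y| ^ (m + 1 - 1) ≤ ((m:ℝ) + 1) * r ^ m :=
        mul_le_mul_of_nonneg_left h1 (by positivity)
      refine this.trans ?_
      have hrm : (0:ℝ) ≤ r ^ m := by positivity
      nlinarith
    refine step1.trans (le_of_eq ?_)
    push_cast
    rw [pow_succ]
    field_simp

lemma hasSum_binomial {a : ℝ} (ha : 0 < a) {x : ℝ} (hx : |x| < 1) :
    HasSum (fun n : ℕ => poch a n / (Nat.factorial n : ℝ) * x ^ n) ((1 - x) ^ (-a)) := by
  set c : ℕ → ℝ := fun n => poch a n / (Nat.factorial n : ℝ) with hcdef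
  have hcpos : ∀ n, 0 < c n := cn_pos ha
  -- summability of the series at any |y| < 1
  have hsum : ∀ {y : ℝ}, |y| < 1 → Summable (fun n => c n * y ^ n) := by
    intro y hy
    set r := (|y| + 1) / 2 with hr
    have hr0 : 0 < r := by rw [hr]; positivity
    have hr1 : r < 1 := by rw [hr]; linarith
    have hyr : |y| ≤ r := by rw [hr]; linarith [abs_nonneg y]
    have hm : Summable (fun n : ℕ => c n * r ^ n) := by
      refine (summable_main ha hr0 hr1).of_nonneg_of_le
        (fun n => by have := (hcpos n).le; positivity) fun n => ?_
      have h0 : c n ≤ c n * ((n:ℝ) + 1) := by nlinarith [(hcpos n).le, @Nat.cast_nonneg ℝ _ _ _ n]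
      calc c n * r ^ n ≤ (c n * ((n:ℝ) + 1)) * r ^ n :=
            mul_le_mul_of_nonneg_right h0 (by positivity)
        _ = c n * ((n:ℝ) + 1) * r ^ n := by ring
    refine hm.of_norm_bounded fun n => ?_
    rw [norm_mul, norm_pow, Real.norm_of_nonneg (hcpos n).le, Real.norm_eq_abs]
    exact mul_le_mul_of_nonneg_left (pow_le_pow_left₀ (abs_nonneg y) hyr n) (hcpos n).le
  -- summability of shifted series
  have hsum' : ∀ {y : ℝ}, |y| < 1 → Summable (fun n => c n * ((n : ℝ) * y ^ (n - 1))) := by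
    intro y hy
    set r := (|y| + 1) / 2 with hr
    have hr0 : 0 < r := by rw [hr]; positivity
    have hr1 : r < 1 := by rw [hr]; linarith
    have hyr : |y| ≤ r := by rw [hr]; linarith [abs_nonneg y]
    refine Summable.of_norm_bounded (((summable_main ha hr0 hr1).div_const r).congr
      fun n => rfl) fun n => ?_
    exact deriv_bound ha n hyr hr0
  -- derivative of the sum
  have hderiv : ∀ {y : ℝ}, |y| < 1 →
      HasDerivAt (fun w => ∑' n, c n * w ^ n) (∑' n, c n * ((n : ℝ) * y ^ (n - 1))) y := by
    intro y hy
    set r := (|y| + 1) / 2 with hr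
    have hr0 : 0 < r := by rw [hr]; positivity
    have hr1 : r < 1 := by rw [hr]; linarith
    have hyr : |y| < r := by rw [hr]; linarith
    refine hasDerivAt_tsum_of_isPreconnected
      (u := fun n => c n * ((n:ℝ) + 1) * r ^ n / r)
      (g := fun n w => c n * w ^ n)
      (g' := fun n w => c n * ((n : ℝ) * w ^ (n - 1)))
      (((summable_main ha hr0 hr1).div_const r).congr fun n => rfl)
      Metric.isOpen_ball (convex_ball (0:ℝ) r).isPreconnected
      (fun n w _ => (hasDerivAt_pow n w).const_mul (c n))
      (fun n w hw => ?_) (Metric.mem_ball_self hr0)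
      (hsum (show |(0:ℝ)| < 1 by norm_num)) ?_
    · rw [Metric.mem_ball, Real.dist_eq, sub_zero] at hw
      rw [Real.norm_eq_abs]
      exact deriv_bound ha n (le_of_lt hw) hr0
    · rw [Metric.mem_ball, Real.dist_eq, sub_zero]
      exact hyr
  -- the ODE
  have hode : ∀ {y : ℝ}, |y| < 1 →
      (1 - y) * (∑' n, c n * ((n : ℝ) * y ^ (n - 1))) = a * ∑' n, c n * y ^ n := by
    intro y hy
    set r := (|y| + 1) / 2 with hr
    have hr0 : 0 < r := by rw [hr]; positivity
    have hr1 : r < 1 := by rw [hr]; linarith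
    have hyr : |y| ≤ r := by rw [hr]; linarith [abs_nonneg y]
    set g : ℕ → ℝ := fun n => c n * ((n : ℝ) * y ^ (n - 1)) with hg
    have hgs : Summable g := hsum' hy
    have hcsucc : ∀ n : ℕ, c (n + 1) * ((n : ℝ) + 1) = c n * (a + n) := by
      intro n
      rw [hcdef]
      simp only
      rw [poch_succ, Nat.factorial_succ]
      have h3 : (Nat.factorial n : ℝ) ≠ 0 := by positivity
      push_cast
      field_simp
    have hsum2 : Summable (fun n : ℕ => c n * (n : ℝ) * y ^ n) := by
      have hm : Summable (fun n : ℕ => c n * ((n:ℝ) + 1) * r ^ n) :=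
        (summable_main ha hr0 hr1).congr fun n => rfl
      refine hm.of_norm_bounded fun n => ?_
      rw [norm_mul, norm_mul, norm_pow, Real.norm_of_nonneg (hcpos n).le,
        Real.norm_of_nonneg (Nat.cast_nonneg n), Real.norm_eq_abs]
      have h1 : |y| ^ n ≤ r ^ n := pow_le_pow_left₀ (abs_nonneg y) hyr n
      have h2 : (0:ℝ) ≤ r ^ n := by positivity
      calc c n * (n:ℝ) * |y| ^ n ≤ c n * (n:ℝ) * r ^ n :=
            mul_le_mul_of_nonneg_left h1 (mul_nonneg (hcpos n).le (Nat.cast_nonneg n))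
        _ ≤ c n * ((n:ℝ) + 1) * r ^ n := by
            have : c n * (n:ℝ) ≤ c n * ((n:ℝ) + 1) := by nlinarith [(hcpos n).le]
            exact mul_le_mul_of_nonneg_right this h2
    -- shift
    have hshift : ∑' n, g n = ∑' n, g (n + 1) := by
      rw [Summable.tsum_eq_zero_add hgs]
      simp [hg]
    have hgsucc : ∀ n : ℕ, g (n + 1) = a * (c n * y ^ n) + c n * (n : ℝ) * y ^ n := by
      intro n
      rw [hg]
      simp only [Nat.add_sub_cancel]
      push_cast
      rw [show c (n+1) * (((n:ℝ) + 1) * y ^ n) = (c (n+1) * ((n:ℝ)+1)) * y ^ n by ring,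
        hcsucc n]
      ring
    have hS : ∑' n, g n = a * (∑' n, c n * y ^ n) + ∑' n, c n * (n : ℝ) * y ^ n := by
      rw [hshift]
      have h1 : Summable (fun n => a * (c n * y ^ n)) := (hsum hy).mul_left a
      calc ∑' n, g (n + 1) = ∑' n, (a * (c n * y ^ n) + c n * (n : ℝ) * y ^ n) :=
            tsum_congr hgsucc
        _ = a * (∑' n, c n * y ^ n) + ∑' n, c n * (n : ℝ) * y ^ n := by
            rw [Summable.tsum_add h1 hsum2, tsum_mul_left]
    have hyS : y * ∑' n, g n = ∑' n, c n * (n : ℝ) * y ^ n := by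
      rw [← tsum_mul_left]
      apply tsum_congr
      intro n
      rcases n with _ | m
      · simp [hg]
      · rw [hg]
        simp only [Nat.add_sub_cancel]
        rw [pow_succ]
        ring
    have expand : (1 - y) * (∑' n, g n) = (∑' n, g n) - y * (∑' n, g n) := by ring
    rw [expand, hyS, hS]
    ring
  -- the function G y = F y * (1-y)^a is locally constant
  have hG : ∀ {y : ℝ}, |y| < 1 →
      HasDerivAt (fun w => (∑' n, c n * w ^ n) * (1 - w) ^ a) 0 y := by
    intro y hy
    have h1y : 0 < 1 - y := by have := abs_lt.mp hy; linarith [this.2]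
    have hF := hderiv hy
    have hid : HasDerivAt (fun w : ℝ => 1 - w) (-1) y := by
      simpa using (hasDerivAt_id y).const_sub 1
    have hrp : HasDerivAt (fun w : ℝ => (1 - w) ^ a) (-1 * a * (1 - y) ^ (a - 1)) y :=
      hid.rpow_const (p := a) (Or.inl h1y.ne')
    have hmul := hF.mul hrp
    refine HasDerivAt.congr_deriv hmul ?_
    have hsplit : (1 - y) ^ a = (1 - y) * (1 - y) ^ (a - 1) := by
      have h := Real.rpow_add h1y 1 (a - 1)
      rw [Real.rpow_one, show (1:ℝ) + (a - 1) = a by ring] at h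
      exact h
    rw [hsplit]
    linear_combination ((1 - y) ^ (a - 1)) * hode hy
  -- conclude G x = G 0 = 1
  have h1x : 0 < 1 - x := by have := abs_lt.mp hx; linarith [this.2]
  set G : ℝ → ℝ := fun w => (∑' n, c n * w ^ n) * (1 - w) ^ a with hGdef
  have habs : ∀ {y : ℝ}, y ∈ Set.Icc (min x 0) (max x 0) → |y| < 1 := by
    intro y hy
    rcases abs_lt.mp hx with ⟨hx1, hx2⟩
    rcases hy with ⟨hy1, hy2⟩
    rw [abs_lt]
    constructor
    · calc -1 < min x 0 := by rcases min_choice x 0 with h | h <;> rw [h] <;> [linarith; norm_num]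
        _ ≤ y := hy1
    · calc y ≤ max x 0 := hy2
        _ < 1 := by rcases max_choice x 0 with h | h <;> rw [h] <;> [linarith; norm_num]
  have hconst : G x = G 0 := by
    have hkey := constant_of_has_deriv_right_zero (f := G) (a := min x 0) (b := max x 0)
      (fun y hy => ((hG (habs hy)).continuousAt).continuousWithinAt)
      (fun y hy => ((hG (habs (Set.mem_Icc_of_Ico hy))).hasDerivWithinAt))
    have hx1 : x ∈ Set.Icc (min x 0) (max x 0) :=
      ⟨min_le_left x 0, le_max_left x 0⟩
    have hx0 : (0:ℝ) ∈ Set.Icc (min x 0) (max x 0) :=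
      ⟨min_le_right x 0, le_max_right x 0⟩
    rw [hkey x hx1, hkey 0 hx0]
  have hG0 : G 0 = 1 := by
    rw [hGdef]
    simp only [sub_zero, Real.one_rpow, mul_one]
    rw [tsum_eq_single 0 (fun n hn => by simp [zero_pow hn])]
    simp [hcdef, poch]
  have hFx : (∑' n, c n * x ^ n) = (1 - x) ^ (-a) := by
    have h := hconst.trans hG0
    rw [hGdef] at h
    simp only at h
    have hA : (0:ℝ) < (1 - x) ^ a := Real.rpow_pos_of_pos h1x a
    rw [Real.rpow_neg h1x.le]
    field_simp at h ⊢
    linarith [h]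
  have := (hsum hx).hasSum
  rwa [hFx] at this


lemma eulerBeta_pos {x y : ℝ} (hx : 0 < x) (hy : 0 < y) : 0 < eulerBeta x y := by
  rw [eulerBeta_eq hx hy]
  have := Real.Gamma_pos_of_pos hx
  have := Real.Gamma_pos_of_pos hy
  have := Real.Gamma_pos_of_pos (add_pos hx hy)
  positivity

lemma eulerBeta_Ioo (x y : ℝ) :
    eulerBeta x y = ∫ t in Set.Ioo (0:ℝ) 1, t ^ (x - 1) * (1 - t) ^ (y - 1) := by
  rw [eulerBeta, intervalIntegral.integral_of_le zero_le_one,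
    MeasureTheory.integral_Ioc_eq_integral_Ioo]

lemma integrableOn_w {x y : ℝ} (hx : 0 < x) (hy : 0 < y) :
    IntegrableOn (fun t : ℝ => t ^ (x - 1) * (1 - t) ^ (y - 1)) (Set.Ioo 0 1) := by
  have h := Complex.betaIntegral_convergent (u := x) (v := y) (by simpa using hx)
    (by simpa using hy)
  rw [intervalIntegrable_iff_integrableOn_Ioc_of_le zero_le_one] at h
  have hre : IntegrableOn
      (fun t : ℝ => ((t:ℂ) ^ ((x:ℂ) - 1) * (1 - (t:ℂ)) ^ ((y:ℂ) - 1)).re) (Set.Ioc 0 1) := h.re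
  refine (hre.mono_set Set.Ioo_subset_Ioc_self).congr_fun (fun t ht => ?_) measurableSet_Ioo
  have h0 : (0:ℝ) ≤ t := ht.1.le
  have h1 : (0:ℝ) ≤ 1 - t := by linarith [ht.2]
  have e1 : ((x:ℂ) - 1) = ((x - 1 : ℝ) : ℂ) := by push_cast; ring
  have e2 : ((y:ℂ) - 1) = ((y - 1 : ℝ) : ℂ) := by push_cast; ring
  simp only [e1, e2]
  rw [← Complex.ofReal_cpow h0, ← Complex.ofReal_one, ← Complex.ofReal_sub,
    ← Complex.ofReal_cpow h1, ← Complex.ofReal_mul]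
  simp

lemma weight_le {p q : ℝ} (hp : 0 ≤ p) (hq : 0 ≤ q) {t : ℝ} (ht0 : 0 ≤ t) (ht1 : t ≤ 1) :
    t ^ p * (1 - t) ^ q ≤ lam p q := by
  have h1t : (0:ℝ) ≤ 1 - t := by linarith
  rcases eq_or_lt_of_le hp with hp0 | hp
  · subst hp0
    rcases eq_or_lt_of_le hq with hq0 | hq
    · subst hq0
      simp [lam, Real.rpow_zero]
    · have hl : lam 0 q = 1 := by
        rw [lam, Real.rpow_zero, one_mul, zero_add, div_self (Real.rpow_pos_of_pos hq q).ne']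
      rw [hl, Real.rpow_zero, one_mul]
      exact Real.rpow_le_one h1t (by linarith) hq.le
  rcases eq_or_lt_of_le hq with hq0 | hq
  · subst hq0
    have hl : lam p 0 = 1 := by
      rw [lam, Real.rpow_zero, mul_one, add_zero, div_self (Real.rpow_pos_of_pos hp p).ne']
    rw [hl, Real.rpow_zero, mul_one]
    exact Real.rpow_le_one ht0 ht1 hp.le
  -- now p, q > 0
  have hlampos : 0 < lam p q := by
    rw [lam]
    have := Real.rpow_pos_of_pos hp p
    have := Real.rpow_pos_of_pos hq q
    have : (0:ℝ) < (p + q) ^ (p + q) := Real.rpow_pos_of_pos (by linarith) (p + q)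
    positivity
  rcases eq_or_lt_of_le ht0 with ht0' | ht0'
  · rw [← ht0', Real.zero_rpow hp.ne', zero_mul]
    exact hlampos.le
  rcases eq_or_lt_of_le ht1 with ht1' | ht1'
  · rw [ht1', sub_self, Real.zero_rpow hq.ne', mul_zero]
    exact hlampos.le
  have h1t' : (0:ℝ) < 1 - t := by linarith
  set s := p + q with hs
  have hspos : 0 < s := by rw [hs]; linarith
  have key := Real.geom_mean_le_arith_mean2_weighted
    (w₁ := p / s) (w₂ := q / s) (p₁ := t * s / p) (p₂ := (1 - t) * s / q)
    (by positivity) (by positivity) (by positivity) (by positivity)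
    (by field_simp; exact hs.symm)
  have hsum1 : p / s * (t * s / p) + q / s * ((1 - t) * s / q) = 1 := by
    field_simp
    ring
  rw [hsum1] at key
  have key2 : ((t * s / p) ^ (p / s) * ((1 - t) * s / q) ^ (q / s)) ^ s ≤ 1 := by
    calc ((t * s / p) ^ (p / s) * ((1 - t) * s / q) ^ (q / s)) ^ s
        ≤ (1:ℝ) ^ s := Real.rpow_le_rpow (by positivity) key hspos.le
      _ = 1 := Real.one_rpow s
  have expand : ((t * s / p) ^ (p / s) * ((1 - t) * s / q) ^ (q / s)) ^ s
      = (t * s / p) ^ p * ((1 - t) * s / q) ^ q := by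
    rw [Real.mul_rpow (by positivity) (by positivity),
      ← Real.rpow_mul (by positivity), ← Real.rpow_mul (by positivity),
      div_mul_cancel₀ _ hspos.ne', div_mul_cancel₀ _ hspos.ne']
  rw [expand] at key2
  have e1 : (t * s / p) ^ p = t ^ p * (s ^ p / p ^ p) := by
    rw [show t * s / p = t * (s / p) by ring, Real.mul_rpow ht0 (by positivity),
      Real.div_rpow hspos.le hp.le]
  have e2 : ((1 - t) * s / q) ^ q = (1 - t) ^ q * (s ^ q / q ^ q) := by
    rw [show (1 - t) * s / q = (1 - t) * (s / q) by ring, Real.mul_rpow h1t (by positivity),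
      Real.div_rpow hspos.le hq.le]
  rw [e1, e2] at key2
  have hss : s ^ p * s ^ q = s ^ s := by
    rw [← Real.rpow_add hspos, hs]
  have hPp : (0:ℝ) < p ^ p := Real.rpow_pos_of_pos hp p
  have hQq : (0:ℝ) < q ^ q := Real.rpow_pos_of_pos hq q
  have hSs : (0:ℝ) < s ^ s := Real.rpow_pos_of_pos hspos s
  have hSp : (0:ℝ) < s ^ p := Real.rpow_pos_of_pos hspos p
  have hSq : (0:ℝ) < s ^ q := Real.rpow_pos_of_pos hspos q
  rw [lam, ← hs]
  rw [le_div_iff₀ hSs]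
  have final : t ^ p * (1 - t) ^ q * (s ^ p * s ^ q) ≤ p ^ p * q ^ q := by
    have hmul := mul_le_mul_of_nonneg_left key2 (le_of_lt (mul_pos hPp hQq))
    calc t ^ p * (1 - t) ^ q * (s ^ p * s ^ q)
        = p ^ p * q ^ q * (t ^ p * (s ^ p / p ^ p) * ((1 - t) ^ q * (s ^ q / q ^ q))) := by
          field_simp
      _ ≤ p ^ p * q ^ q * 1 := hmul
      _ = p ^ p * q ^ q := mul_one _
  rw [← hss]
  exact final

lemma integral_f {a z : ℝ} (ha1 : a ≠ 1) (hz : z ≠ 0) (hz1 : |z| < 1) :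
    ∫ t in Set.Ioo (0:ℝ) 1, (1 - z * t) ^ (-a)
      = (1 - (1 - z) ^ (1 - a)) / ((1 - a) * z) := by
  have hpos : ∀ t ∈ Set.Icc (0:ℝ) 1, 0 < 1 - z * t := by
    intro t ht
    have h1 : z * t ≤ |z| * t := mul_le_mul_of_nonneg_right (le_abs_self z) ht.1
    have h2 : |z| * t ≤ |z| := by nlinarith [abs_nonneg z, ht.2]
    linarith
  have huIcc : Set.uIcc (0:ℝ) 1 = Set.Icc 0 1 := Set.uIcc_of_le zero_le_one
  have hcont : ContinuousOn (fun t : ℝ => (1 - z * t) ^ (-a)) (Set.Icc 0 1) := by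
    apply ContinuousOn.rpow_const
    · exact (continuousOn_const.sub (continuousOn_const.mul continuousOn_id))
    · intro t ht
      exact Or.inl (hpos t ht).ne'
  have hderiv : ∀ t ∈ Set.uIcc (0:ℝ) 1,
      HasDerivAt (fun s : ℝ => (1 - z * s) ^ (1 - a) / ((a - 1) * z)) ((1 - z * t) ^ (-a)) t := by
    intro t ht
    rw [huIcc] at ht
    have hlin : HasDerivAt (fun s : ℝ => 1 - z * s) (-z) t := by
      simpa using ((hasDerivAt_id t).const_mul z).const_sub 1
    have hr : HasDerivAt (fun s : ℝ => (1 - z * s) ^ (1 - a))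
        (-z * (1 - a) * (1 - z * t) ^ (1 - a - 1)) t :=
      hlin.rpow_const (p := 1 - a) (Or.inl (hpos t ht).ne')
    have := hr.div_const ((a - 1) * z)
    refine this.congr_deriv ?_
    rw [show (1:ℝ) - a - 1 = -a by ring]
    have ha1' : a - 1 ≠ 0 := sub_ne_zero.mpr ha1
    field_simp
    ring
  have hii : IntervalIntegrable (fun t : ℝ => (1 - z * t) ^ (-a)) volume 0 1 := by
    apply ContinuousOn.intervalIntegrable
    rwa [huIcc]
  have hFTC := intervalIntegral.integral_eq_sub_of_hasDerivAt hderiv hii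
  rw [← MeasureTheory.integral_Ioc_eq_integral_Ioo,
    ← intervalIntegral.integral_of_le zero_le_one, hFTC]
  have ha1' : a - 1 ≠ 0 := sub_ne_zero.mpr ha1
  have ha1'' : (1:ℝ) - a ≠ 0 := fun h => ha1 (by linarith [h])
  rw [mul_one, mul_zero, sub_zero, Real.one_rpow]
  field_simp
  ring

lemma summable_c {a y : ℝ} (ha : 0 < a) (hy : |y| < 1) :
    Summable (fun n : ℕ => poch a n / (Nat.factorial n : ℝ) * y ^ n) := by
  have hcpos : ∀ n : ℕ, 0 < poch a n / (Nat.factorial n : ℝ) := by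
    intro n
    have := poch_pos_s4 ha n
    have : (0:ℝ) < (Nat.factorial n : ℝ) := by positivity
    have := poch_pos_s4 ha n
    positivity
  set r := (|y| + 1) / 2 with hr
  have hr0 : 0 < r := by rw [hr]; positivity
  have hr1 : r < 1 := by rw [hr]; linarith
  have hyr : |y| ≤ r := by rw [hr]; linarith [abs_nonneg y]
  have hm : Summable (fun n : ℕ => poch a n / (Nat.factorial n : ℝ) * r ^ n) := by
    refine (summable_main ha hr0 hr1).of_nonneg_of_le
      (fun n => by have := (hcpos n).le; positivity) fun n => ?_
    have h0 : poch a n / (Nat.factorial n : ℝ) ≤ poch a n / (Nat.factorial n : ℝ) * ((n:ℝ) + 1) :=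
      by nlinarith [(hcpos n).le, @Nat.cast_nonneg ℝ _ _ _ n]
    calc poch a n / (Nat.factorial n : ℝ) * r ^ n
        ≤ (poch a n / (Nat.factorial n : ℝ) * ((n:ℝ) + 1)) * r ^ n :=
          mul_le_mul_of_nonneg_right h0 (by positivity)
      _ = poch a n / (Nat.factorial n : ℝ) * ((n:ℝ) + 1) * r ^ n := by ring
  refine hm.of_norm_bounded fun n => ?_
  rw [norm_mul, norm_pow, Real.norm_of_nonneg (hcpos n).le, Real.norm_eq_abs]
  exact mul_le_mul_of_nonneg_left (pow_le_pow_left₀ (abs_nonneg y) hyr n) (hcpos n).le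

theorem stmt4 (a b c z : ℝ) (ha : 0 < a) (ha1 : a ≠ 1) (hb : 1 ≤ b) (hc : b + 1 ≤ c)
    (hz0 : 0 < |z|) (hz1 : |z| < 1) :
    twoF1 a b c z ≤
      lam (b - 1) (c - b - 1) / eulerBeta b (c - b) *
        ((1 - (1 - z) ^ (1 - a)) / ((1 - a) * z)) := by
  have hzne : z ≠ 0 := by
    intro h
    rw [h, abs_zero] at hz0
    exact lt_irrefl 0 hz0
  have hb0 : (0:ℝ) < b := by linarith
  have hcb : (0:ℝ) < c - b := by linarith
  have hBpos : 0 < eulerBeta b (c - b) := eulerBeta_pos hb0 hcb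
  set w : ℝ → ℝ := fun t => t ^ (b - 1) * (1 - t) ^ (c - b - 1) with hw
  set F : ℕ → ℝ → ℝ := fun n t => poch a n / (Nat.factorial n : ℝ) * z ^ n * (w t * t ^ n)
    with hFdef
  have hfpos : ∀ t ∈ Set.Icc (0:ℝ) 1, 0 < 1 - z * t := by
    intro t ht
    have h1 : z * t ≤ |z| * t := mul_le_mul_of_nonneg_right (le_abs_self z) ht.1
    have h2 : |z| * t ≤ |z| := by nlinarith [abs_nonneg z, ht.2]
    linarith
  have hwnn : ∀ t ∈ Set.Ioo (0:ℝ) 1, 0 ≤ w t := by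
    intro t ht
    have h1 : 0 ≤ t ^ (b - 1) := Real.rpow_nonneg ht.1.le _
    have h2 : 0 ≤ (1 - t) ^ (c - b - 1) := Real.rpow_nonneg (by linarith [ht.2]) _
    simp only [hw]
    positivity
  have hwt : ∀ (n : ℕ), ∀ t ∈ Set.Ioo (0:ℝ) 1,
      w t * t ^ n = t ^ (b + (n:ℝ) - 1) * (1 - t) ^ (c - b - 1) := by
    intro n t ht
    simp only [hw]
    rw [show (t ^ (b - 1) * (1 - t) ^ (c - b - 1)) * t ^ n
        = (t ^ (b - 1) * t ^ ((n:ℕ):ℝ)) * (1 - t) ^ (c - b - 1) by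
          rw [Real.rpow_natCast]; ring,
      ← Real.rpow_add ht.1, show b - 1 + (n:ℝ) = b + (n:ℝ) - 1 by ring]
  have hInt : ∀ n : ℕ, IntegrableOn (fun t => w t * t ^ n) (Set.Ioo (0:ℝ) 1) := by
    intro n
    have h0 : (0:ℝ) < b + (n:ℝ) := by positivity
    exact (integrableOn_w h0 hcb).congr_fun (fun t ht => (hwt n t ht).symm) measurableSet_Ioo
  have hIval : ∀ n : ℕ, (∫ t in Set.Ioo (0:ℝ) 1, w t * t ^ n)
      = eulerBeta (b + (n:ℝ)) (c - b) := by
    intro n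
    rw [setIntegral_congr_fun measurableSet_Ioo (fun t ht => hwt n t ht)]
    exact (eulerBeta_Ioo _ _).symm
  have hBle : ∀ n : ℕ, eulerBeta (b + (n:ℝ)) (c - b) ≤ eulerBeta b (c - b) := by
    intro n
    rw [← hIval n]
    have h0 : eulerBeta b (c - b) = ∫ t in Set.Ioo (0:ℝ) 1, w t * t ^ 0 := by
      have := hIval 0
      simpa using this.symm
    rw [h0]
    apply setIntegral_mono_on (hInt n) (hInt 0) measurableSet_Ioo
    intro t ht
    have h1 : t ^ n ≤ 1 := pow_le_one₀ ht.1.le ht.2.le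
    have h2 : 0 ≤ w t := hwnn t ht
    calc w t * t ^ n ≤ w t * 1 := mul_le_mul_of_nonneg_left h1 h2
      _ = w t * t ^ 0 := by simp
  have hnormval : ∀ n : ℕ, (∫ t in Set.Ioo (0:ℝ) 1, ‖F n t‖)
      = poch a n / (Nat.factorial n : ℝ) * |z| ^ n * eulerBeta (b + (n:ℝ)) (c - b) := by
    intro n
    have hcn : 0 ≤ poch a n / (Nat.factorial n : ℝ) := by
      have := poch_pos_s4 ha n
      have : (0:ℝ) < (Nat.factorial n : ℝ) := by positivity
      have := poch_pos_s4 ha n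
      positivity
    have heq : ∀ t ∈ Set.Ioo (0:ℝ) 1,
        ‖F n t‖ = poch a n / (Nat.factorial n : ℝ) * |z| ^ n * (w t * t ^ n) := by
      intro t ht
      simp only [hFdef]
      rw [Real.norm_eq_abs, abs_mul, abs_mul, abs_of_nonneg hcn, abs_pow,
        abs_of_nonneg (mul_nonneg (hwnn t ht) (pow_nonneg ht.1.le n))]
    rw [setIntegral_congr_fun measurableSet_Ioo (fun t ht => heq t ht),
      MeasureTheory.integral_const_mul, hIval n]
  have hsumnorm : Summable (fun n : ℕ => ∫ t in Set.Ioo (0:ℝ) 1, ‖F n t‖) := by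
    have hmaj : Summable (fun n : ℕ =>
        poch a n / (Nat.factorial n : ℝ) * |z| ^ n * eulerBeta b (c - b)) :=
      (summable_c ha (by rwa [abs_abs])).mul_right _
    refine hmaj.of_nonneg_of_le (fun n => ?_) (fun n => ?_)
    · exact setIntegral_nonneg measurableSet_Ioo fun t _ => norm_nonneg _
    · rw [hnormval n]
      have hcn : 0 ≤ poch a n / (Nat.factorial n : ℝ) * |z| ^ n := by
        have := poch_pos_s4 ha n
        have h2 : (0:ℝ) < (Nat.factorial n : ℝ) := by positivity
        positivity
      exact mul_le_mul_of_nonneg_left (hBle n) hcn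
  have hFint : ∀ n : ℕ, Integrable (F n) (volume.restrict (Set.Ioo (0:ℝ) 1)) := by
    intro n
    exact (hInt n).const_mul _
  have hkey := MeasureTheory.hasSum_integral_of_summable_integral_norm
    (μ := volume.restrict (Set.Ioo (0:ℝ) 1)) hFint hsumnorm
  have hlim : (∫ t in Set.Ioo (0:ℝ) 1, (∑' n, F n t))
      = ∫ t in Set.Ioo (0:ℝ) 1, w t * (1 - z * t) ^ (-a) := by
    apply setIntegral_congr_fun measurableSet_Ioo
    intro t ht
    have habs : |z * t| < 1 := by
      rw [abs_mul, abs_of_pos ht.1]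
      nlinarith [abs_nonneg z, ht.2]
    have hbs := hasSum_binomial ha habs
    have hFt : ∀ n, F n t = w t * (poch a n / (Nat.factorial n : ℝ) * (z * t) ^ n) := by
      intro n
      simp only [hFdef]
      rw [mul_pow]
      ring
    show (∑' n, F n t) = w t * (1 - z * t) ^ (-a)
    rw [tsum_congr hFt, tsum_mul_left, hbs.tsum_eq]
  rw [hlim] at hkey
  have hterm : ∀ n : ℕ, (∫ t in Set.Ioo (0:ℝ) 1, F n t)
      = poch a n * poch b n / poch c n * z ^ n / (Nat.factorial n : ℝ)
          * eulerBeta b (c - b) := by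
    intro n
    have h1 : (∫ t in Set.Ioo (0:ℝ) 1, F n t)
        = poch a n / (Nat.factorial n : ℝ) * z ^ n
            * ∫ t in Set.Ioo (0:ℝ) 1, w t * t ^ n := by
      simp only [hFdef]
      exact MeasureTheory.integral_const_mul _ _
    rw [h1, hIval n, ← poch_ratio hb0 hcb n]
    have hfn : (Nat.factorial n : ℝ) ≠ 0 := by positivity
    have hpc : poch c n ≠ 0 := (poch_pos_s4 (by linarith : (0:ℝ) < c) n).ne'
    field_simp
  simp only [hterm] at hkey
  have hkey2 : HasSum
      (fun n : ℕ => poch a n * poch b n / poch c n * z ^ n / (Nat.factorial n : ℝ))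
      ((∫ t in Set.Ioo (0:ℝ) 1, w t * (1 - z * t) ^ (-a)) / eulerBeta b (c - b)) := by
    have h := hkey.mul_right (eulerBeta b (c - b))⁻¹
    rw [div_eq_mul_inv]
    convert h using 2 with n
    · rfl
    rw [mul_assoc, mul_inv_cancel₀ hBpos.ne', mul_one]
  have htwo : twoF1 a b c z
      = (∫ t in Set.Ioo (0:ℝ) 1, w t * (1 - z * t) ^ (-a)) / eulerBeta b (c - b) := by
    rw [twoF1]
    exact hkey2.tsum_eq
  have hfnn : ∀ t ∈ Set.Ioo (0:ℝ) 1, 0 ≤ (1 - z * t) ^ (-a) := fun t ht =>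
    Real.rpow_nonneg (hfpos t (Set.Ioo_subset_Icc_self ht)).le _
  have hcontf : ContinuousOn (fun t : ℝ => (1 - z * t) ^ (-a)) (Set.Icc 0 1) := by
    apply ContinuousOn.rpow_const
    · exact continuousOn_const.sub (continuousOn_const.mul continuousOn_id)
    · exact fun t ht => Or.inl (hfpos t ht).ne'
  have hfint : IntegrableOn (fun t : ℝ => (1 - z * t) ^ (-a)) (Set.Ioo (0:ℝ) 1) :=
    (hcontf.integrableOn_Icc).mono_set Set.Ioo_subset_Icc_self
  have hwfint : IntegrableOn (fun t => w t * (1 - z * t) ^ (-a)) (Set.Ioo (0:ℝ) 1) := by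
    have hIz : 0 < 1 - |z| := by linarith
    have hIntw : IntegrableOn w (Set.Ioo (0:ℝ) 1) := by
      have := hInt 0
      simpa using this
    refine Integrable.mono' (hIntw.const_mul ((1 - |z|) ^ (-a))) ?_ ?_
    · have hcw : ContinuousOn w (Set.Ioo (0:ℝ) 1) := by
        apply ContinuousOn.mul
        · exact continuousOn_id.rpow_const fun t ht => Or.inl ht.1.ne'
        · exact (continuousOn_const.sub continuousOn_id).rpow_const
            fun t ht => Or.inl (by simp; linarith [ht.2] : (1:ℝ) - t ≠ 0)
      exact ((hcw.mul (hcontf.mono Set.Ioo_subset_Icc_self)).aestronglyMeasurable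
        measurableSet_Ioo)
    · rw [ae_restrict_iff' measurableSet_Ioo]
      apply ae_of_all
      intro t ht
      have hb1 : 1 - |z| ≤ 1 - z * t := by
        have h1 : z * t ≤ |z| * t := mul_le_mul_of_nonneg_right (le_abs_self z) ht.1.le
        have h2 : |z| * t ≤ |z| := by nlinarith [abs_nonneg z, ht.2]
        linarith
      have hfle : (1 - z * t) ^ (-a) ≤ (1 - |z|) ^ (-a) :=
        Real.rpow_le_rpow_of_nonpos hIz hb1 (by linarith)
      rw [Real.norm_eq_abs, abs_of_nonneg (mul_nonneg (hwnn t ht) (hfnn t ht))]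
      calc w t * (1 - z * t) ^ (-a) ≤ w t * (1 - |z|) ^ (-a) :=
            mul_le_mul_of_nonneg_left hfle (hwnn t ht)
        _ = (1 - |z|) ^ (-a) * w t := by ring
  have hIle : (∫ t in Set.Ioo (0:ℝ) 1, w t * (1 - z * t) ^ (-a))
      ≤ ∫ t in Set.Ioo (0:ℝ) 1, lam (b - 1) (c - b - 1) * (1 - z * t) ^ (-a) := by
    apply setIntegral_mono_on hwfint (hfint.const_mul _) measurableSet_Ioo
    intro t ht
    exact mul_le_mul_of_nonneg_right
      (weight_le (by linarith) (by linarith) ht.1.le ht.2.le) (hfnn t ht)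
  have hJ : (∫ t in Set.Ioo (0:ℝ) 1, lam (b - 1) (c - b - 1) * (1 - z * t) ^ (-a))
      = lam (b - 1) (c - b - 1) * ((1 - (1 - z) ^ (1 - a)) / ((1 - a) * z)) := by
    rw [MeasureTheory.integral_const_mul, integral_f ha1 hzne hz1]
  rw [htwo, show lam (b - 1) (c - b - 1) / eulerBeta b (c - b) *
      ((1 - (1 - z) ^ (1 - a)) / ((1 - a) * z))
      = (lam (b - 1) (c - b - 1) * ((1 - (1 - z) ^ (1 - a)) / ((1 - a) * z)))
          / eulerBeta b (c - b) by ring]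
  rw [← hJ]
  gcongr
end

section
/- (Grüss discrete inequality) Let n ≥ 1 and let (x_k), (y_k), (m_k), 1 ≤ k ≤ n, be families of real numbers such that m_k ≥ 0, γ ≤ x_k ≤ Γ and φ ≤ y_k ≤ Φ for all k ∈ {1,…,n}. Then |(∑_{k=1}^n m_k)(∑_{k=1}^n m_k x_k y_k) − (∑_{k=1}^n m_k x_k)(∑_{k=1}^n m_k y_k)| ≤ (1/4)(∑_{k=1}^n m_k)² (Γ−γ)(Φ−φ). -/
set_option maxHeartbeats 1000000 in

theorem stmt7 (n : ℕ) (hn : 1 ≤ n) (x y m : ℕ → ℝ) (γ Γ φ Φ : ℝ)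
    (hm : ∀ k ∈ Finset.Icc 1 n, 0 ≤ m k)
    (hxl : ∀ k ∈ Finset.Icc 1 n, γ ≤ x k) (hxu : ∀ k ∈ Finset.Icc 1 n, x k ≤ Γ)
    (hyl : ∀ k ∈ Finset.Icc 1 n, φ ≤ y k) (hyu : ∀ k ∈ Finset.Icc 1 n, y k ≤ Φ) :
    |(∑ k ∈ Finset.Icc 1 n, m k) * (∑ k ∈ Finset.Icc 1 n, m k * x k * y k) -
        (∑ k ∈ Finset.Icc 1 n, m k * x k) * (∑ k ∈ Finset.Icc 1 n, m k * y k)| ≤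
      (1 / 4) * (∑ k ∈ Finset.Icc 1 n, m k) ^ 2 * (Γ - γ) * (Φ - φ) := by
  have h1 : (1 : ℕ) ∈ Finset.Icc 1 n := by simp; omega
  set s := Finset.Icc 1 n with hs
  have hΓγ : γ ≤ Γ := le_trans (hxl 1 h1) (hxu 1 h1)
  have hΦφ : φ ≤ Φ := le_trans (hyl 1 h1) (hyu 1 h1)
  have hM0 : 0 ≤ ∑ k ∈ s, m k := Finset.sum_nonneg hm
  -- double sum identity
  have key : ∀ f : ℕ → ℝ, ∀ g : ℕ → ℝ,
      ∑ p ∈ s ×ˢ s, m p.1 * m p.2 * (f p.1 - f p.2) * (g p.1 - g p.2)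
        = 2 * ((∑ k ∈ s, m k) * (∑ k ∈ s, m k * f k * g k)
            - (∑ k ∈ s, m k * f k) * (∑ k ∈ s, m k * g k)) := by
    intro f g
    rw [Finset.sum_product]
    have inner : ∀ i ∈ s, ∑ j ∈ s, m i * m j * (f i - f j) * (g i - g j)
        = (m i * f i * g i) * (∑ k ∈ s, m k) + m i * (∑ k ∈ s, m k * f k * g k)
          - (m i * f i) * (∑ k ∈ s, m k * g k) - (m i * g i) * (∑ k ∈ s, m k * f k) := by
      intro i _
      rw [Finset.sum_congr rfl (fun j _ => (by ring :
        m i * m j * (f i - f j) * (g i - g j)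
          = (m i * f i * g i) * m j + m i * (m j * f j * g j)
            - (m i * f i) * (m j * g j) - (m i * g i) * (m j * f j)))]
      simp only [Finset.sum_sub_distrib, Finset.sum_add_distrib, ← Finset.mul_sum]
    rw [Finset.sum_congr rfl inner]
    simp only [Finset.sum_sub_distrib, Finset.sum_add_distrib, ← Finset.sum_mul]
    ring
  -- variance-type bound
  have varbound : ∀ f : ℕ → ℝ, ∀ a b : ℝ, (∀ k ∈ s, a ≤ f k) → (∀ k ∈ s, f k ≤ b) →
      2 * ((∑ k ∈ s, m k) * (∑ k ∈ s, m k * f k * f k)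
          - (∑ k ∈ s, m k * f k) * (∑ k ∈ s, m k * f k))
        ≤ (1/2) * (∑ k ∈ s, m k) ^ 2 * (b - a) ^ 2 := by
    intro f a b hl hu
    have hnn : 0 ≤ ∑ k ∈ s, m k * ((b - f k) * (f k - a)) :=
      Finset.sum_nonneg fun k hk => mul_nonneg (hm k hk)
        (mul_nonneg (sub_nonneg.2 (hu k hk)) (sub_nonneg.2 (hl k hk)))
    have hexp : ∑ k ∈ s, m k * ((b - f k) * (f k - a))
        = (a + b) * (∑ k ∈ s, m k * f k) - a * b * (∑ k ∈ s, m k)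
          - (∑ k ∈ s, m k * f k * f k) := by
      rw [Finset.sum_congr rfl (fun k _ => (by ring :
        m k * ((b - f k) * (f k - a))
          = (a + b) * (m k * f k) - a * b * (m k) - m k * f k * f k))]
      simp only [Finset.sum_sub_distrib, ← Finset.mul_sum]
    rw [hexp] at hnn
    nlinarith [sq_nonneg ((∑ k ∈ s, m k * f k) - (a+b)/2 * (∑ k ∈ s, m k)),
      mul_nonneg hM0 hnn]
  -- Cauchy–Schwarz on the product set
  have cs := Finset.sum_mul_sq_le_sq_mul_sq (s ×ˢ s)
    (fun p => Real.sqrt (m p.1 * m p.2) * (x p.1 - x p.2))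
    (fun p => Real.sqrt (m p.1 * m p.2) * (y p.1 - y p.2))
  have hmm : ∀ p ∈ s ×ˢ s, 0 ≤ m p.1 * m p.2 := by
    intro p hp
    rw [Finset.mem_product] at hp
    exact mul_nonneg (hm _ hp.1) (hm _ hp.2)
  have e1 : ∑ p ∈ s ×ˢ s, (Real.sqrt (m p.1 * m p.2) * (x p.1 - x p.2)) *
      (Real.sqrt (m p.1 * m p.2) * (y p.1 - y p.2))
      = ∑ p ∈ s ×ˢ s, m p.1 * m p.2 * (x p.1 - x p.2) * (y p.1 - y p.2) :=
    Finset.sum_congr rfl fun p hp => by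
      rw [show (Real.sqrt (m p.1 * m p.2) * (x p.1 - x p.2)) *
        (Real.sqrt (m p.1 * m p.2) * (y p.1 - y p.2))
        = (Real.sqrt (m p.1 * m p.2) * Real.sqrt (m p.1 * m p.2)) * (x p.1 - x p.2) * (y p.1 - y p.2) by ring,
        Real.mul_self_sqrt (hmm p hp)]
  have e2 : ∑ p ∈ s ×ˢ s, (Real.sqrt (m p.1 * m p.2) * (x p.1 - x p.2)) ^ 2
      = ∑ p ∈ s ×ˢ s, m p.1 * m p.2 * (x p.1 - x p.2) * (x p.1 - x p.2) :=
    Finset.sum_congr rfl fun p hp => by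
      rw [mul_pow, Real.sq_sqrt (hmm p hp)]; ring
  have e3 : ∑ p ∈ s ×ˢ s, (Real.sqrt (m p.1 * m p.2) * (y p.1 - y p.2)) ^ 2
      = ∑ p ∈ s ×ˢ s, m p.1 * m p.2 * (y p.1 - y p.2) * (y p.1 - y p.2) :=
    Finset.sum_congr rfl fun p hp => by
      rw [mul_pow, Real.sq_sqrt (hmm p hp)]; ring
  rw [e1, e2, e3, key x y, key x x, key y y] at cs
  have bx := varbound x γ Γ hxl hxu
  have by' := varbound y φ Φ hyl hyu
  have hxnn : (0:ℝ) ≤ 2 * ((∑ k ∈ s, m k) * (∑ k ∈ s, m k * x k * x k)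
      - (∑ k ∈ s, m k * x k) * (∑ k ∈ s, m k * x k)) := by
    rw [← key x x]
    exact Finset.sum_nonneg fun p hp => by nlinarith [hmm p hp, sq_nonneg (x p.1 - x p.2)]
  have hynn : (0:ℝ) ≤ 2 * ((∑ k ∈ s, m k) * (∑ k ∈ s, m k * y k * y k)
      - (∑ k ∈ s, m k * y k) * (∑ k ∈ s, m k * y k)) := by
    rw [← key y y]
    exact Finset.sum_nonneg fun p hp => by nlinarith [hmm p hp, sq_nonneg (y p.1 - y p.2)]
  have hUy : (0:ℝ) ≤ (1/2) * (∑ k ∈ s, m k) ^ 2 * (Φ - φ) ^ 2 := by positivity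
  have hsq : (2 * ((∑ k ∈ s, m k) * (∑ k ∈ s, m k * x k * y k)
        - (∑ k ∈ s, m k * x k) * (∑ k ∈ s, m k * y k))) ^ 2
      ≤ ((1/2) * (∑ k ∈ s, m k) ^ 2 * (Γ - γ) ^ 2)
        * ((1/2) * (∑ k ∈ s, m k) ^ 2 * (Φ - φ) ^ 2) :=
    le_trans cs (mul_le_mul bx by' hynn (le_trans hxnn bx))
  have hC : (0:ℝ) ≤ (1/4) * (∑ k ∈ s, m k) ^ 2 * (Γ - γ) * (Φ - φ) := by
    have h2 := sq_nonneg (∑ k ∈ s, m k)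
    have h3 := sub_nonneg.2 hΓγ
    have h4 := sub_nonneg.2 hΦφ
    have := mul_nonneg (mul_nonneg (by linarith : (0:ℝ) ≤ (1/4) * (∑ k ∈ s, m k) ^ 2) h3) h4
    linarith [this]
  set T := (∑ k ∈ s, m k) * (∑ k ∈ s, m k * x k * y k)
      - (∑ k ∈ s, m k * x k) * (∑ k ∈ s, m k * y k) with hT
  set C := (1/4) * (∑ k ∈ s, m k) ^ 2 * (Γ - γ) * (Φ - φ) with hC'
  have hsq' : T ^ 2 ≤ C ^ 2 := by
    have : ((1/2) * (∑ k ∈ s, m k) ^ 2 * (Γ - γ) ^ 2)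
        * ((1/2) * (∑ k ∈ s, m k) ^ 2 * (Φ - φ) ^ 2) = 4 * C ^ 2 := by rw [hC']; ring
    rw [this] at hsq
    linarith [hsq]
  rw [abs_le]
  constructor <;> nlinarith [hsq', hC, sq_nonneg (T - C), sq_nonneg (T + C)]
end

section
/- Let 0 < b < c and z, z₀ ∈ ℝ with 0 < z ≤ z₀. Then |₁F₁(b;c;z) − e^{z−z₀} ₁F₁(b;c;z₀)| ≤ e^{z₀}/4. -/
open Real MeasureTheory

namespace Stmt11Aux

lemma poch_pos {x : ℝ} (hx : 0 < x) (n : ℕ) : 0 < poch x n :=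
  Finset.prod_pos fun k _ => by positivity

lemma poch_succ (x : ℝ) (n : ℕ) : poch x (n + 1) = poch x n * (x + n) :=
  Finset.prod_range_succ _ _

variable {b c : ℝ}

/-- The ratio sequence `a n = (b)_n / (c)_n`. -/
noncomputable def a (b c : ℝ) (n : ℕ) : ℝ := poch b n / poch c n

lemma a_pos (hb : 0 < b) (hc : 0 < c) (n : ℕ) : 0 < a b c n :=
  div_pos (poch_pos hb n) (poch_pos hc n)

lemma a_le_one (hb : 0 < b) (hbc : b ≤ c) (n : ℕ) : a b c n ≤ 1 := by
  have hc : 0 < c := lt_of_lt_of_le hb hbc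
  rw [a, div_le_one (poch_pos hc n)]
  exact Finset.prod_le_prod (fun k _ => by positivity)
    (fun k _ => by linarith)

lemma a_anti (hb : 0 < b) (hbc : b ≤ c) : Antitone (a b c) := by
  have hc : 0 < c := lt_of_lt_of_le hb hbc
  apply antitone_nat_of_succ_le
  intro n
  have h2 : (0:ℝ) < b + n := by positivity
  have h3 : (0:ℝ) < c + n := by positivity
  have h4 : 0 < poch c n := poch_pos hc n
  have h5 : 0 < poch b n := poch_pos hb n
  rw [a, a, poch_succ, poch_succ,
    div_le_div_iff₀ (by positivity) h4]
  nlinarith [mul_pos h5 h4]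

lemma summable_expSeries (t : ℝ) : Summable (fun n : ℕ => t ^ n / (Nat.factorial n : ℝ)) :=
  Real.summable_pow_div_factorial t

lemma summable_norm_expSeries {t : ℝ} (ht : 0 ≤ t) :
    Summable (fun n : ℕ => ‖t ^ n / (Nat.factorial n : ℝ)‖) := by
  have : ∀ n : ℕ, ‖t ^ n / (Nat.factorial n : ℝ)‖ = t ^ n / (Nat.factorial n : ℝ) := by
    intro n
    rw [Real.norm_eq_abs, abs_of_nonneg (by positivity)]
  simpa [this] using summable_expSeries t

lemma summable_F (hb : 0 < b) (hbc : b ≤ c) {t : ℝ} (ht : 0 ≤ t) :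
    Summable (fun n : ℕ => poch b n / poch c n * t ^ n / (Nat.factorial n : ℝ)) := by
  have hc : 0 < c := lt_of_lt_of_le hb hbc
  apply Summable.of_nonneg_of_le
    (fun n => by have h1 := poch_pos hb n; have h2 := poch_pos hc n; positivity)
    (fun n => ?_) (summable_expSeries t)
  have h1 : poch b n / poch c n ≤ 1 := a_le_one hb hbc n
  have h2 : (0:ℝ) ≤ t ^ n / (Nat.factorial n : ℝ) := by positivity
  calc poch b n / poch c n * t ^ n / (Nat.factorial n : ℝ)
      = poch b n / poch c n * (t ^ n / (Nat.factorial n : ℝ)) := by ring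
    _ ≤ 1 * (t ^ n / (Nat.factorial n : ℝ)) := by
        exact mul_le_mul_of_nonneg_right h1 h2
    _ = t ^ n / (Nat.factorial n : ℝ) := one_mul _

lemma summable_norm_F (hb : 0 < b) (hbc : b ≤ c) {t : ℝ} (ht : 0 ≤ t) :
    Summable (fun n : ℕ => ‖poch b n / poch c n * t ^ n / (Nat.factorial n : ℝ)‖) := by
  have hc : 0 < c := lt_of_lt_of_le hb hbc
  have : ∀ n : ℕ, ‖poch b n / poch c n * t ^ n / (Nat.factorial n : ℝ)‖
      = poch b n / poch c n * t ^ n / (Nat.factorial n : ℝ) := by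
    intro n
    rw [Real.norm_eq_abs, abs_of_nonneg]
    have := a_pos hb hc n
    rw [a] at this
    positivity
  simpa [this] using summable_F hb hbc ht

lemma F_nonneg (hb : 0 < b) (hbc : b ≤ c) {t : ℝ} (ht : 0 ≤ t) : 0 ≤ oneF1 b c t := by
  have hc : 0 < c := lt_of_lt_of_le hb hbc
  apply tsum_nonneg
  intro n
  have := a_pos hb hc n
  rw [a] at this
  positivity

lemma F_mono (hb : 0 < b) (hbc : b ≤ c) {s t : ℝ} (hs : 0 ≤ s) (hst : s ≤ t) :
    oneF1 b c s ≤ oneF1 b c t := by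
  have hc : 0 < c := lt_of_lt_of_le hb hbc
  apply Summable.tsum_le_tsum _ (summable_F hb hbc hs) (summable_F hb hbc (le_trans hs hst))
  intro n
  have h1 : s ^ n ≤ t ^ n := pow_le_pow_left₀ hs hst n
  have h2 : (0:ℝ) < poch b n / poch c n := a_pos hb hc n
  have h3 : (0:ℝ) < (Nat.factorial n : ℝ) := by positivity
  gcongr

lemma F_le_exp (hb : 0 < b) (hbc : b ≤ c) {t : ℝ} (ht : 0 ≤ t) :
    oneF1 b c t ≤ Real.exp t := by
  have hc : 0 < c := lt_of_lt_of_le hb hbc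
  have hexp : Real.exp t = ∑' n : ℕ, t ^ n / (Nat.factorial n : ℝ) := by
    rw [Real.exp_eq_exp_ℝ, NormedSpace.exp_eq_tsum_div]
  rw [hexp]
  apply Summable.tsum_le_tsum _ (summable_F hb hbc ht) (summable_expSeries t)
  intro n
  have h1 : poch b n / poch c n ≤ 1 := a_le_one hb hbc n
  have h2 : (0:ℝ) ≤ t ^ n / (Nat.factorial n : ℝ) := by positivity
  calc poch b n / poch c n * t ^ n / (Nat.factorial n : ℝ)
      = poch b n / poch c n * (t ^ n / (Nat.factorial n : ℝ)) := by ring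
    _ ≤ 1 * (t ^ n / (Nat.factorial n : ℝ)) := mul_le_mul_of_nonneg_right h1 h2
    _ = t ^ n / (Nat.factorial n : ℝ) := one_mul _

/-- Pairing inequality: for an antitone nonneg sequence and `0 ≤ s ≤ t`,
`(a k - a m) * (s^k t^m - s^m t^k) ≥ 0`. -/
lemma pair_ineq {α : ℕ → ℝ} (ha : Antitone α) {s t : ℝ} (hs : 0 ≤ s) (hst : s ≤ t)
    (k m : ℕ) :
    α m * (s ^ k * t ^ m) + α k * (s ^ m * t ^ k)
      ≤ α m * (t ^ k * s ^ m) + α k * (t ^ m * s ^ k) := by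
  have ht : 0 ≤ t := le_trans hs hst
  rcases le_total k m with h | h
  · have h1 : α m ≤ α k := ha h
    have hsm : s ^ m = s ^ k * s ^ (m - k) := by
      rw [← pow_add, Nat.add_sub_cancel' h]
    have htm : t ^ m = t ^ k * t ^ (m - k) := by
      rw [← pow_add, Nat.add_sub_cancel' h]
    have hq : s ^ (m - k) ≤ t ^ (m - k) := pow_le_pow_left₀ hs hst _
    have h2 : (0:ℝ) ≤ s ^ k := pow_nonneg hs k
    have h3 : (0:ℝ) ≤ t ^ k := pow_nonneg ht k
    rw [hsm, htm]
    nlinarith [mul_nonneg (sub_nonneg.2 h1) (mul_nonneg (mul_nonneg h2 h3) (sub_nonneg.2 hq))]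
  · have h1 : α k ≤ α m := ha h
    have hsk : s ^ k = s ^ m * s ^ (k - m) := by
      rw [← pow_add, Nat.add_sub_cancel' h]
    have htk : t ^ k = t ^ m * t ^ (k - m) := by
      rw [← pow_add, Nat.add_sub_cancel' h]
    have hq : s ^ (k - m) ≤ t ^ (k - m) := pow_le_pow_left₀ hs hst _
    have h2 : (0:ℝ) ≤ s ^ m := pow_nonneg hs m
    have h3 : (0:ℝ) ≤ t ^ m := pow_nonneg ht m
    rw [hsk, htk]
    nlinarith [mul_nonneg (sub_nonneg.2 h1) (mul_nonneg (mul_nonneg h2 h3) (sub_nonneg.2 hq))]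

/-- The key inequality: `e^s · F(t) ≤ e^t · F(s)` for `0 ≤ s ≤ t`. -/
lemma key (hb : 0 < b) (hbc : b ≤ c) {s t : ℝ} (hs : 0 ≤ s) (hst : s ≤ t) :
    Real.exp s * oneF1 b c t ≤ Real.exp t * oneF1 b c s := by
  have hc : 0 < c := lt_of_lt_of_le hb hbc
  have ht : 0 ≤ t := le_trans hs hst
  have hexps : Real.exp s = ∑' n : ℕ, s ^ n / (Nat.factorial n : ℝ) := by
    rw [Real.exp_eq_exp_ℝ, NormedSpace.exp_eq_tsum_div]
  have hexpt : Real.exp t = ∑' n : ℕ, t ^ n / (Nat.factorial n : ℝ) := by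
    rw [Real.exp_eq_exp_ℝ, NormedSpace.exp_eq_tsum_div]
  rw [hexps, hexpt, oneF1, oneF1]
  rw [tsum_mul_tsum_eq_tsum_sum_range_of_summable_norm
    (summable_norm_expSeries hs) (summable_norm_F hb hbc ht)]
  rw [tsum_mul_tsum_eq_tsum_sum_range_of_summable_norm
    (summable_norm_expSeries ht) (summable_norm_F hb hbc hs)]
  apply Summable.tsum_le_tsum _
    ((summable_norm_sum_mul_range_of_summable_norm
      (summable_norm_expSeries hs) (summable_norm_F hb hbc ht)).of_norm)
    ((summable_norm_sum_mul_range_of_summable_norm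
      (summable_norm_expSeries ht) (summable_norm_F hb hbc hs)).of_norm)
  intro n
  -- per-`n` finite sum inequality
  set φ : ℕ → ℝ := fun k =>
    s ^ k / (Nat.factorial k : ℝ) *
      (poch b (n - k) / poch c (n - k) * t ^ (n - k) / (Nat.factorial (n - k) : ℝ)) with hφ
  set ψ : ℕ → ℝ := fun k =>
    t ^ k / (Nat.factorial k : ℝ) *
      (poch b (n - k) / poch c (n - k) * s ^ (n - k) / (Nat.factorial (n - k) : ℝ)) with hψ
  show ∑ k ∈ Finset.range (n + 1), φ k ≤ ∑ k ∈ Finset.range (n + 1), ψ k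
  have reflφ : ∑ k ∈ Finset.range (n + 1), φ (n - k) = ∑ k ∈ Finset.range (n + 1), φ k := by
    simpa using Finset.sum_range_reflect φ (n + 1)
  have reflψ : ∑ k ∈ Finset.range (n + 1), ψ (n - k) = ∑ k ∈ Finset.range (n + 1), ψ k := by
    simpa using Finset.sum_range_reflect ψ (n + 1)
  have hpair : ∀ k ∈ Finset.range (n + 1), φ k + φ (n - k) ≤ ψ k + ψ (n - k) := by
    intro k hk
    have hkn : k ≤ n := Nat.lt_succ_iff.mp (Finset.mem_range.mp hk)
    have hnk : n - (n - k) = k := Nat.sub_sub_self hkn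
    set m := n - k with hm
    have haa := pair_ineq (a_anti hb hbc) hs hst k m
    rw [a, a] at haa
    have hfk : (0:ℝ) < (Nat.factorial k : ℝ) := by positivity
    have hfm : (0:ℝ) < (Nat.factorial m : ℝ) := by positivity
    have hfk' : (Nat.factorial k : ℝ) ≠ 0 := ne_of_gt hfk
    have hfm' : (Nat.factorial m : ℝ) ≠ 0 := ne_of_gt hfm
    have hck : poch c k ≠ 0 := ne_of_gt (poch_pos hc k)
    have hcm : poch c m ≠ 0 := ne_of_gt (poch_pos hc m)
    have e1 : φ k + φ (n - k)
        = (poch b m / poch c m * (s ^ k * t ^ m) + poch b k / poch c k * (s ^ m * t ^ k))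
          / ((Nat.factorial k : ℝ) * (Nat.factorial m : ℝ)) := by
      simp only [hφ, ← hm, hnk]
      field_simp
    have e2 : ψ k + ψ (n - k)
        = (poch b m / poch c m * (t ^ k * s ^ m) + poch b k / poch c k * (t ^ m * s ^ k))
          / ((Nat.factorial k : ℝ) * (Nat.factorial m : ℝ)) := by
      simp only [hψ, ← hm, hnk]
      field_simp
    rw [e1, e2]
    gcongr
  have hsum := Finset.sum_le_sum hpair
  rw [Finset.sum_add_distrib, Finset.sum_add_distrib, reflφ, reflψ] at hsum
  linarith

end Stmt11Aux

theorem stmt11 (b c z z₀ : ℝ) (hb : 0 < b) (hbc : b < c) (hz : 0 < z) (hzz : z ≤ z₀) :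
    |oneF1 b c z - Real.exp (z - z₀) * oneF1 b c z₀| ≤ Real.exp z₀ / 4 := by
  have hbc' : b ≤ c := le_of_lt hbc
  have hz' : 0 ≤ z := le_of_lt hz
  have hz₀ : 0 ≤ z₀ := le_trans hz' hzz
  have hez : (0:ℝ) < Real.exp z := Real.exp_pos z
  have hez₀ : (0:ℝ) < Real.exp z₀ := Real.exp_pos z₀
  -- key inequality gives nonnegativity of the difference
  have hkey := Stmt11Aux.key hb hbc' hz' hzz
  have hexp_sub : Real.exp (z - z₀) = Real.exp z / Real.exp z₀ := Real.exp_sub z z₀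
  have hlower : Real.exp (z - z₀) * oneF1 b c z₀ ≤ oneF1 b c z := by
    rw [hexp_sub]
    rw [div_mul_eq_mul_div, div_le_iff₀ hez₀]
    calc Real.exp z * oneF1 b c z₀ ≤ Real.exp z₀ * oneF1 b c z := hkey
      _ = oneF1 b c z * Real.exp z₀ := by ring
  have hFz_le_Fz₀ : oneF1 b c z ≤ oneF1 b c z₀ := Stmt11Aux.F_mono hb hbc' hz' hzz
  have hFz_le_exp : oneF1 b c z ≤ Real.exp z := Stmt11Aux.F_le_exp hb hbc' hz'
  have hFz_nonneg : 0 ≤ oneF1 b c z := Stmt11Aux.F_nonneg hb hbc' hz'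
  have hE1 : Real.exp (z - z₀) ≤ 1 := by
    rw [Real.exp_le_one_iff]; linarith
  have hE0 : 0 < Real.exp (z - z₀) := Real.exp_pos _
  have hupper : oneF1 b c z - Real.exp (z - z₀) * oneF1 b c z₀
      ≤ Real.exp z * (1 - Real.exp (z - z₀)) := by
    have h1 : Real.exp (z - z₀) * oneF1 b c z ≤ Real.exp (z - z₀) * oneF1 b c z₀ :=
      mul_le_mul_of_nonneg_left hFz_le_Fz₀ (le_of_lt hE0)
    have h2 : oneF1 b c z * (1 - Real.exp (z - z₀)) ≤ Real.exp z * (1 - Real.exp (z - z₀)) :=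
      mul_le_mul_of_nonneg_right hFz_le_exp (by linarith)
    nlinarith
  have hfinal : Real.exp z * (1 - Real.exp (z - z₀)) ≤ Real.exp z₀ / 4 := by
    set E := Real.exp (z₀ - z) with hEdef
    have hE : 1 ≤ E := by
      rw [hEdef]
      exact Real.one_le_exp (by linarith)
    have hprod : Real.exp (z - z₀) * E = 1 := by
      have harg : (z - z₀) + (z₀ - z) = 0 := by ring
      rw [hEdef, ← Real.exp_add, harg, Real.exp_zero]
    have hz₀eq : Real.exp z₀ = Real.exp z * E := by
      rw [hEdef, ← Real.exp_add]
      congr 1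
      ring
    have hEpos : (0:ℝ) < E := by linarith
    have h4 : 1 - Real.exp (z - z₀) ≤ E / 4 := by
      nlinarith [sq_nonneg (E - 2), hprod, hE, Real.exp_pos (z - z₀)]
    calc Real.exp z * (1 - Real.exp (z - z₀)) ≤ Real.exp z * (E / 4) :=
          mul_le_mul_of_nonneg_left h4 (le_of_lt hez)
      _ = Real.exp z₀ / 4 := by rw [hz₀eq]; ring
  rw [abs_of_nonneg (by linarith)]
  linarith
end
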